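/- arXiv:1706.05638 — 2 statements merged into one kernel-verified Lean document; each statement's English description precedes it below -/
import Mathlib

section
/- Let τ > 0, let α̂ ≤ 0 be a real number, let a : [0,∞) → ℝ be locally integrable with a(s) ≥ α̂ for all s ≥ 0, and let Γ : [−τ, ∞) → ℝⁿ be continuous. Then for every t ≥ 0: exp(−∫_0^t a(s) ds) · sup_{θ ∈ [−τ,0]} |Γ(t+θ)|² ≤ e^{−α̂·τ} · ( sup_{θ ∈ [−τ,0]} |Γ(θ)|² + sup_{s ∈ [max(t−τ,0), t]} exp(−∫_0^s a(r) dr)·|Γ(s)|² ). -/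
open Set MeasureTheory intervalIntegral Real


/-- Weighted-supremum inequality for the segment process: for τ > 0, alphaHat ≤ 0,
a locally integrable with a ≥ alphaHat on [0,∞), and Γ continuous on [−τ,∞),
for every t ≥ 0,
exp(−∫_0^t a)·sup_{θ∈[−τ,0]} |Γ(t+θ)|² ≤
  e^{−alphaHatτ}·(sup_{θ∈[−τ,0]} |Γ(θ)|² + sup_{s∈[max(t−τ,0),t]} exp(−∫_0^s a)·|Γ(s)|²). -/
theorem stmt_8 (n : ℕ) (τ : ℝ) (hτ : 0 < τ) (alphaHat : ℝ) (halphaHat : alphaHat ≤ 0)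
    (a : ℝ → ℝ)
    (ha_int : ∀ t : ℝ, 0 ≤ t → IntervalIntegrable a MeasureTheory.volume 0 t)
    (ha : ∀ s : ℝ, 0 ≤ s → alphaHat ≤ a s)
    (Γ : ℝ → EuclideanSpace ℝ (Fin n))
    (hΓ : ContinuousOn Γ (Set.Ici (-τ)))
    (t : ℝ) (ht : 0 ≤ t) :
    Real.exp (-∫ s in (0 : ℝ)..t, a s)
        * (⨆ θ : Set.Icc (-τ) (0 : ℝ), ‖Γ (t + (θ : ℝ))‖ ^ 2)
      ≤ Real.exp (-(alphaHat * τ))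
        * ((⨆ θ : Set.Icc (-τ) (0 : ℝ), ‖Γ (θ : ℝ)‖ ^ 2)
          + ⨆ s : Set.Icc (max (t - τ) 0) t,
              Real.exp (-∫ r in (0 : ℝ)..(s : ℝ), a r) * ‖Γ (s : ℝ)‖ ^ 2) := by
  have hτ' : -τ ≤ 0 := by linarith
  have hne1 : (0:ℝ) ∈ Icc (-τ) (0:ℝ) := ⟨hτ', le_refl 0⟩
  have htI : t ∈ Icc (max (t - τ) 0) t := ⟨max_le (by linarith) ht, le_refl t⟩
  haveI : Nonempty (Icc (-τ) (0:ℝ)) := ⟨⟨0, hne1⟩⟩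
  haveI : Nonempty (Icc (max (t - τ) 0) t) := ⟨⟨t, htI⟩⟩
  set M1 : ℝ := ⨆ θ : Set.Icc (-τ) (0 : ℝ), ‖Γ (θ : ℝ)‖ ^ 2 with hM1
  set F : ℝ → ℝ := fun s => Real.exp (-∫ r in (0 : ℝ)..s, a r) * ‖Γ s‖ ^ 2 with hF
  set M2 : ℝ := ⨆ s : Set.Icc (max (t - τ) 0) t, F (s : ℝ) with hM2
  -- bddAbove of the two sups
  have hb1 : BddAbove (Set.range fun θ : Icc (-τ) (0:ℝ) => ‖Γ (θ : ℝ)‖ ^ 2) := by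
    rw [← Set.image_eq_range (fun x => ‖Γ x‖ ^ 2) (Icc (-τ) (0:ℝ))]
    exact (isCompact_Icc.image_of_continuousOn
      (((hΓ.mono (Icc_subset_Ici_self)).norm).pow 2)).bddAbove
  have hprim : ContinuousOn (fun b => ∫ x in (0:ℝ)..b, a x) (Icc 0 t) := by
    have := intervalIntegral.continuousOn_primitive_interval' (ha_int t ht)
      (left_mem_uIcc (a := (0:ℝ)) (b := t))
    rwa [uIcc_of_le ht] at this
  have hsubI : Icc (max (t - τ) 0) t ⊆ Icc 0 t := Icc_subset_Icc (le_max_right _ _) le_rfl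
  have hsubI' : Icc (max (t - τ) 0) t ⊆ Ici (-τ) := fun x hx =>
    le_trans (by linarith : -τ ≤ (0:ℝ)) ((hsubI hx).1)
  have hFcont : ContinuousOn F (Icc (max (t - τ) 0) t) := by
    apply ContinuousOn.mul
    · exact (Real.continuous_exp.comp_continuousOn ((hprim.mono hsubI).neg))
    · exact ((hΓ.mono hsubI').norm).pow 2
  have hb2 : BddAbove (Set.range fun s : Icc (max (t - τ) 0) t => F (s : ℝ)) := by
    rw [← Set.image_eq_range F (Icc (max (t - τ) 0) t)]
    exact (isCompact_Icc.image_of_continuousOn hFcont).bddAbove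
  have hM1nn : (0:ℝ) ≤ M1 :=
    le_trans (by positivity) (le_ciSup hb1 ⟨0, hne1⟩)
  have hM2nn : (0:ℝ) ≤ M2 :=
    le_trans (by positivity : (0:ℝ) ≤ F t) (le_ciSup hb2 ⟨t, htI⟩)
  set R : ℝ := Real.exp (-(alphaHat * τ)) * (M1 + M2) with hR
  -- key pointwise bound
  have key : ∀ θ : Icc (-τ) (0:ℝ),
      Real.exp (-∫ s in (0:ℝ)..t, a s) * ‖Γ (t + (θ:ℝ))‖ ^ 2 ≤ R := by
    rintro ⟨θ, hθ1, hθ2⟩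
    dsimp only
    set s := t + θ with hs
    have hintmono : ∀ u v : ℝ, 0 ≤ u → u ≤ v →
        alphaHat * (v - u) ≤ ∫ r in u..v, a r := by
      intro u v hu huv
      have hint : IntervalIntegrable a volume u v :=
        (ha_int v (hu.trans huv)).mono_set
          (by rw [uIcc_of_le huv, uIcc_of_le (hu.trans huv)]
              exact Icc_subset_Icc hu le_rfl)
      have := intervalIntegral.integral_mono_on huv
        (intervalIntegrable_const (c := alphaHat)) hint
        (fun x hx => ha x (hu.trans hx.1))
      simpa [intervalIntegral.integral_const, smul_eq_mul, mul_comm] using this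
    rcases le_total s 0 with hs0 | hs0
    · -- s ≤ 0 : use M1
      have htτ : t ≤ τ := by linarith
      have hsmem : s ∈ Icc (-τ) (0:ℝ) := ⟨by linarith, hs0⟩
      have h1 : ‖Γ s‖ ^ 2 ≤ M1 := le_ciSup hb1 ⟨s, hsmem⟩
      have h2 : Real.exp (-∫ r in (0:ℝ)..t, a r) ≤ Real.exp (-(alphaHat * τ)) := by
        apply Real.exp_le_exp.2
        have := hintmono 0 t le_rfl ht
        have : alphaHat * τ ≤ ∫ r in (0:ℝ)..t, a r := by
          refine le_trans ?_ this
          nlinarith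
        linarith
      calc Real.exp (-∫ r in (0:ℝ)..t, a r) * ‖Γ s‖ ^ 2
          ≤ Real.exp (-(alphaHat * τ)) * M1 := by
            apply mul_le_mul h2 h1 (by positivity) (le_of_lt (Real.exp_pos _))
        _ ≤ R := by
            rw [hR]
            have := Real.exp_pos (-(alphaHat * τ))
            nlinarith
    · -- 0 ≤ s : use M2
      have hsmem : s ∈ Icc (max (t - τ) 0) t :=
        ⟨max_le (by linarith) hs0, by linarith⟩
      have h1 : F s ≤ M2 := le_ciSup hb2 ⟨s, hsmem⟩
      have hst : s ≤ t := by linarith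
      have hsplit : (∫ r in (0:ℝ)..t, a r)
          = (∫ r in (0:ℝ)..s, a r) + ∫ r in s..t, a r := by
        have h0s : IntervalIntegrable a volume 0 s := ha_int s hs0
        have hstint : IntervalIntegrable a volume s t :=
          (ha_int t ht).mono_set
            (by rw [uIcc_of_le hst, uIcc_of_le ht]; exact Icc_subset_Icc hs0 le_rfl)
        exact (intervalIntegral.integral_add_adjacent_intervals h0s hstint).symm
      have h2 : Real.exp (-∫ r in s..t, a r) ≤ Real.exp (-(alphaHat * τ)) := by
        apply Real.exp_le_exp.2
        have h3 := hintmono s t hs0 hst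
        have : alphaHat * τ ≤ ∫ r in s..t, a r := by
          refine le_trans ?_ h3
          nlinarith
        linarith
      have heq : Real.exp (-∫ r in (0:ℝ)..t, a r) * ‖Γ s‖ ^ 2
          = Real.exp (-∫ r in s..t, a r) * F s := by
        rw [hF]
        dsimp only
        rw [← mul_assoc, ← Real.exp_add, hsplit]
        ring_nf
      rw [heq]
      calc Real.exp (-∫ r in s..t, a r) * F s
          ≤ Real.exp (-(alphaHat * τ)) * M2 :=
            mul_le_mul h2 h1 (by positivity) (le_of_lt (Real.exp_pos _))
        _ ≤ R := by
            rw [hR]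
            have := Real.exp_pos (-(alphaHat * τ))
            nlinarith
  -- conclude
  have hepos : (0:ℝ) < Real.exp (-∫ s in (0:ℝ)..t, a s) := Real.exp_pos _
  have hsup : (⨆ θ : Icc (-τ) (0:ℝ), ‖Γ (t + (θ:ℝ))‖ ^ 2)
      ≤ Real.exp (∫ s in (0:ℝ)..t, a s) * R := by
    apply ciSup_le
    intro θ
    have h := mul_le_mul_of_nonneg_left (key θ) (Real.exp_pos (∫ s in (0:ℝ)..t, a s)).le
    rw [← mul_assoc, ← Real.exp_add] at h
    simpa using h
  calc Real.exp (-∫ s in (0:ℝ)..t, a s) * (⨆ θ : Icc (-τ) (0:ℝ), ‖Γ (t + (θ:ℝ))‖ ^ 2)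
      ≤ Real.exp (-∫ s in (0:ℝ)..t, a s) * (Real.exp (∫ s in (0:ℝ)..t, a s) * R) :=
        mul_le_mul_of_nonneg_left hsup hepos.le
    _ = R := by rw [← mul_assoc, ← Real.exp_add]; simp
end

section
/- Let τ > 0, let v be a Borel probability measure on [−τ, 0], let α̂ ∈ ℝ and β̌ ≥ 0, and let a, β : ℝ → ℝ be measurable functions, integrable on compact intervals, with a(r) ≥ α̂ for all r and 0 ≤ β(r) ≤ β̌ for all r. Then for every t ≥ 0: ∫_0^t ∫_{[−τ,0]} β(s−θ)·exp(−∫_s^{s−θ} a(r) dr) v(dθ) ds ≤ τ·β̌·e^{|α̂|·τ} + ( ∫_{[−τ,0]} e^{α̂·θ} v(dθ) ) · ∫_0^t β(s) ds. -/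
open MeasureTheory

/-- Distributed-delay exponential-functional bound: for a probability measure v
on [−τ,0], a ≥ alphaHat and 0 ≤ β ≤ betaCheck locally integrable, for every t ≥ 0,
∫_0^t ∫ β(s−θ)·exp(−∫_s^{s−θ} a) v(dθ) ds
  ≤ τ·betaCheck·e^{|alphaHat|τ} + (∫ e^{alphaHatθ} v(dθ))·∫_0^t β(s) ds. -/
theorem stmt_9 (τ : ℝ) (hτ : 0 < τ) (v : Measure ℝ) [IsProbabilityMeasure v]
    (hv : v (Set.Icc (-τ) 0)ᶜ = 0)
    (alphaHat betaCheck : ℝ) (hbetaCheck : 0 ≤ betaCheck) (a b : ℝ → ℝ)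
    (ha_meas : Measurable a) (hb_meas : Measurable b)
    (ha_int : ∀ s t : ℝ, IntervalIntegrable a MeasureTheory.volume s t)
    (hb_int : ∀ s t : ℝ, IntervalIntegrable b MeasureTheory.volume s t)
    (ha : ∀ r : ℝ, alphaHat ≤ a r) (hb : ∀ r : ℝ, 0 ≤ b r ∧ b r ≤ betaCheck)
    (t : ℝ) (ht : 0 ≤ t) :
    (∫ s in (0 : ℝ)..t, ∫ θ, b (s - θ) * Real.exp (-∫ r in s..(s - θ), a r) ∂v)
      ≤ τ * betaCheck * Real.exp (|alphaHat| * τ)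
        + (∫ θ, Real.exp (alphaHat * θ) ∂v) * ∫ s in (0 : ℝ)..t, b s := by
  set E : ℝ := Real.exp (|alphaHat| * τ) with hE
  set I : ℝ := ∫ s in (0:ℝ)..t, b s with hIdef
  have hI0 : 0 ≤ I := intervalIntegral.integral_nonneg ht (fun u _ => (hb u).1)
  have hE0 : (0:ℝ) < E := Real.exp_pos _
  set P : ℝ → ℝ := fun x => ∫ r in (0:ℝ)..x, a r with hP
  have hPc : Continuous P := intervalIntegral.continuous_primitive ha_int 0
  have hrw : ∀ s θ : ℝ, (∫ r in s..(s - θ), a r) = P (s - θ) - P s := fun s θ =>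
    (intervalIntegral.integral_interval_sub_left (ha_int 0 (s - θ)) (ha_int 0 s)).symm
  have hvae : ∀ᵐ θ ∂v, θ ∈ Set.Icc (-τ) 0 := mem_ae_iff.2 hv
  -- exponent bounds
  have hexp : ∀ s θ : ℝ, θ ∈ Set.Icc (-τ) 0 →
      Real.exp (-(P (s - θ) - P s)) ≤ Real.exp (alphaHat * θ) := by
    intro s θ hθ
    have hθ0 : θ ≤ 0 := hθ.2
    have hle : s ≤ s - θ := by linarith
    have h1 : (∫ _r in s..(s - θ), alphaHat) ≤ ∫ r in s..(s - θ), a r :=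
      intervalIntegral.integral_mono_on hle intervalIntegrable_const (ha_int s (s - θ))
        (fun x _ => ha x)
    rw [hrw, intervalIntegral.integral_const, smul_eq_mul] at h1
    have : alphaHat * (-θ) ≤ P (s - θ) - P s := by
      have : (s - θ - s) * alphaHat = alphaHat * (-θ) := by ring
      linarith [h1, this.symm ▸ h1]
    exact Real.exp_le_exp.2 (by linarith)
  have hexpE : ∀ θ ∈ Set.Icc (-τ:ℝ) 0, Real.exp (alphaHat * θ) ≤ E := by
    intro θ hθ
    apply Real.exp_le_exp.2
    calc alphaHat * θ ≤ |alphaHat * θ| := le_abs_self _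
      _ = |alphaHat| * |θ| := abs_mul _ _
      _ ≤ |alphaHat| * τ := by
          refine mul_le_mul_of_nonneg_left ?_ (abs_nonneg _)
          rw [abs_le]
          exact ⟨by linarith [hθ.1], by linarith [hθ.2]⟩
  -- the two kernels
  set fp : ℝ × ℝ → ℝ := fun p => b (p.1 - p.2) * Real.exp (-(P (p.1 - p.2) - P p.1)) with hfp
  set gp : ℝ × ℝ → ℝ := fun p => b (p.1 - p.2) * Real.exp (alphaHat * p.2) with hgp
  have hfp_meas : Measurable fp :=
    (hb_meas.comp (measurable_fst.sub measurable_snd)).mul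
      ((Real.continuous_exp.comp
        (((hPc.comp (continuous_fst.sub continuous_snd)).sub
          (hPc.comp continuous_fst)).neg)).measurable)
  have hgp_meas : Measurable gp :=
    (hb_meas.comp (measurable_fst.sub measurable_snd)).mul
      ((Real.continuous_exp.comp (continuous_const.mul continuous_snd)).measurable)
  have hfp_nonneg : ∀ p, 0 ≤ fp p := fun p =>
    mul_nonneg (hb (p.1 - p.2)).1 (Real.exp_pos _).le
  have hgp_nonneg : ∀ p, 0 ≤ gp p := fun p =>
    mul_nonneg (hb (p.1 - p.2)).1 (Real.exp_pos _).le
  have hfp_bd : ∀ s θ : ℝ, θ ∈ Set.Icc (-τ) 0 → ‖fp (s, θ)‖ ≤ betaCheck * E := by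
    intro s θ hθ
    rw [Real.norm_eq_abs, abs_of_nonneg (hfp_nonneg _)]
    exact mul_le_mul (hb _).2 ((hexp s θ hθ).trans (hexpE θ hθ)) (Real.exp_pos _).le hbetaCheck
  have hgp_bd : ∀ s θ : ℝ, θ ∈ Set.Icc (-τ) 0 → ‖gp (s, θ)‖ ≤ betaCheck * E := by
    intro s θ hθ
    rw [Real.norm_eq_abs, abs_of_nonneg (hgp_nonneg _)]
    exact mul_le_mul (hb _).2 (hexpE θ hθ) (Real.exp_pos _).le hbetaCheck
  -- step A : pointwise in s
  have hf_int : ∀ s : ℝ, Integrable (fun θ => fp (s, θ)) v := by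
    intro s
    refine Integrable.mono' (integrable_const (betaCheck * E))
      ((hfp_meas.comp (measurable_const.prodMk measurable_id)).aestronglyMeasurable) ?_
    exact hvae.mono fun θ hθ => hfp_bd s θ hθ
  have hg_int : ∀ s : ℝ, Integrable (fun θ => gp (s, θ)) v := by
    intro s
    refine Integrable.mono' (integrable_const (betaCheck * E))
      ((hgp_meas.comp (measurable_const.prodMk measurable_id)).aestronglyMeasurable) ?_
    exact hvae.mono fun θ hθ => hgp_bd s θ hθ
  set F : ℝ → ℝ := fun s => ∫ θ, fp (s, θ) ∂v with hF
  set G : ℝ → ℝ := fun s => ∫ θ, gp (s, θ) ∂v with hG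
  have hFG : ∀ s : ℝ, F s ≤ G s := by
    intro s
    refine integral_mono_ae (hf_int s) (hg_int s) ?_
    refine hvae.mono fun θ hθ => ?_
    exact mul_le_mul_of_nonneg_left (hexp s θ hθ) (hb (s - θ)).1
  -- interval integrability of F and G
  have hFm : StronglyMeasurable F := hfp_meas.stronglyMeasurable.integral_prod_right'
  have hGm : StronglyMeasurable G := hgp_meas.stronglyMeasurable.integral_prod_right'
  have hFbd : ∀ s : ℝ, ‖F s‖ ≤ betaCheck * E := by
    intro s
    have := norm_integral_le_of_norm_le_const (μ := v)
      (f := fun θ => fp (s, θ)) (C := betaCheck * E) (hvae.mono fun θ hθ => hfp_bd s θ hθ)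
    simpa using this
  have hGbd : ∀ s : ℝ, ‖G s‖ ≤ betaCheck * E := by
    intro s
    have := norm_integral_le_of_norm_le_const (μ := v)
      (f := fun θ => gp (s, θ)) (C := betaCheck * E) (hvae.mono fun θ hθ => hgp_bd s θ hθ)
    simpa using this
  have hFint : IntervalIntegrable F volume 0 t := by
    rw [intervalIntegrable_iff]
    refine Integrable.mono' (integrableOn_const measure_Ioc_lt_top.ne)
      hFm.aestronglyMeasurable.restrict (ae_of_all _ fun s => hFbd s)
  have hGint : IntervalIntegrable G volume 0 t := by
    rw [intervalIntegrable_iff]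
    refine Integrable.mono' (integrableOn_const measure_Ioc_lt_top.ne)
      hGm.aestronglyMeasurable.restrict (ae_of_all _ fun s => hGbd s)
  -- product measure and Fubini
  set μ : Measure ℝ := volume.restrict (Set.Ioc 0 t) with hμ
  haveI : IsFiniteMeasure μ := ⟨by
    rw [hμ, Measure.restrict_apply_univ]
    exact measure_Ioc_lt_top⟩
  have hprodae : ∀ᵐ p ∂(μ.prod v), p.2 ∈ Set.Icc (-τ) 0 := by
    rw [MeasureTheory.ae_iff]
    have hset : {p : ℝ × ℝ | ¬ p.2 ∈ Set.Icc (-τ) 0} = Set.univ ×ˢ (Set.Icc (-τ) 0)ᶜ := by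
      ext p; simp
    rw [hset, Measure.prod_prod, hv, mul_zero]
  have hgprod : Integrable gp (μ.prod v) := by
    refine Integrable.mono' (integrable_const (betaCheck * E))
      hgp_meas.aestronglyMeasurable ?_
    exact hprodae.mono fun p hp => hgp_bd p.1 p.2 hp
  have hswap : (∫ s, G s ∂μ) = ∫ θ, (∫ s, gp (s, θ) ∂μ) ∂v :=
    integral_integral_swap (f := fun s θ => gp (s, θ)) hgprod
  -- bound the θ-marginal
  set H : ℝ → ℝ := fun θ => ∫ s, gp (s, θ) ∂μ with hH
  have hHint : Integrable H v := hgprod.integral_prod_right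
  have hHbound : ∀ θ ∈ Set.Icc (-τ:ℝ) 0,
      H θ ≤ Real.exp (alphaHat * θ) * (τ * betaCheck + I) := by
    intro θ hθ
    have hθ0 : θ ≤ 0 := hθ.2
    have hθτ : -τ ≤ θ := hθ.1
    have h1 : H θ = (∫ s in (0:ℝ)..t, b (s - θ)) * Real.exp (alphaHat * θ) := by
      rw [hH]
      simp only [hgp]
      rw [intervalIntegral.integral_of_le ht]
      exact integral_mul_const _ _
    have h2 : (∫ s in (0:ℝ)..t, b (s - θ)) = ∫ u in (-θ)..(t - θ), b u := by
      simpa using intervalIntegral.integral_comp_sub_right (a := (0:ℝ)) (b := t) b θ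
    have hsplit : (∫ u in (-θ)..(t - θ), b u)
        = (∫ u in (-θ)..(0:ℝ), b u) + ((∫ u in (0:ℝ)..t, b u) + ∫ u in t..(t - θ), b u) := by
      rw [intervalIntegral.integral_add_adjacent_intervals (hb_int 0 t) (hb_int t (t - θ)),
        intervalIntegral.integral_add_adjacent_intervals (hb_int (-θ) 0) (hb_int 0 (t - θ))]
    have hneg : (∫ u in (-θ)..(0:ℝ), b u) ≤ 0 := by
      rw [intervalIntegral.integral_symm]
      have : (0:ℝ) ≤ ∫ u in (0:ℝ)..(-θ), b u :=
        intervalIntegral.integral_nonneg (by linarith) (fun u _ => (hb u).1)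
      linarith
    have htail : (∫ u in t..(t - θ), b u) ≤ τ * betaCheck := by
      have hle : t ≤ t - θ := by linarith
      have := intervalIntegral.integral_mono_on hle (hb_int t (t - θ))
        intervalIntegrable_const (fun x _ => (hb x).2)
      rw [intervalIntegral.integral_const, smul_eq_mul] at this
      have h3 : (t - θ - t) * betaCheck ≤ τ * betaCheck := by
        apply mul_le_mul_of_nonneg_right _ hbetaCheck
        linarith
      linarith
    have hmain : (∫ s in (0:ℝ)..t, b (s - θ)) ≤ τ * betaCheck + I := by
      rw [h2, hsplit]
      simp only [hIdef]
      linarith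
    rw [h1, mul_comm]
    exact mul_le_mul_of_nonneg_left hmain (Real.exp_pos _).le
  have hbnd_int : Integrable (fun θ => Real.exp (alphaHat * θ) * (τ * betaCheck + I)) v := by
    refine Integrable.mono' (integrable_const (E * (τ * betaCheck + I)))
      ((Real.continuous_exp.comp (continuous_const.mul continuous_id)).mul
        continuous_const).aestronglyMeasurable ?_
    refine hvae.mono fun θ hθ => ?_
    rw [Real.norm_eq_abs, abs_of_nonneg (mul_nonneg (Real.exp_pos _).le (by positivity))]
    exact mul_le_mul_of_nonneg_right (hexpE θ hθ) (by positivity)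
  have hstepD : (∫ θ, H θ ∂v) ≤ ∫ θ, Real.exp (alphaHat * θ) * (τ * betaCheck + I) ∂v :=
    integral_mono_ae hHint hbnd_int (hvae.mono fun θ hθ => hHbound θ hθ)
  have hmulright : (∫ θ, Real.exp (alphaHat * θ) * (τ * betaCheck + I) ∂v)
      = (∫ θ, Real.exp (alphaHat * θ) ∂v) * (τ * betaCheck + I) :=
    integral_mul_const _ _
  have hexp_int : Integrable (fun θ => Real.exp (alphaHat * θ)) v := by
    refine Integrable.mono' (integrable_const E)
      ((Real.continuous_exp.comp (continuous_const.mul continuous_id)).aestronglyMeasurable) ?_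
    refine hvae.mono fun θ hθ => ?_
    rw [Real.norm_eq_abs, abs_of_nonneg (Real.exp_pos _).le]
    exact hexpE θ hθ
  have hexp_le : (∫ θ, Real.exp (alphaHat * θ) ∂v) ≤ E := by
    have h := integral_mono_ae hexp_int (integrable_const E) (hvae.mono fun θ hθ => hexpE θ hθ)
    simpa [measure_univ] using h
  have hexp_nn : (0:ℝ) ≤ ∫ θ, Real.exp (alphaHat * θ) ∂v :=
    integral_nonneg fun θ => (Real.exp_pos _).le
  -- assemble
  calc (∫ s in (0 : ℝ)..t, ∫ θ, b (s - θ) * Real.exp (-∫ r in s..(s - θ), a r) ∂v)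
      = ∫ s in (0:ℝ)..t, F s := by
        simp only [hrw]
        rfl
    _ ≤ ∫ s in (0:ℝ)..t, G s :=
        intervalIntegral.integral_mono_on ht hFint hGint (fun s _ => hFG s)
    _ = ∫ s, G s ∂μ := intervalIntegral.integral_of_le ht
    _ = ∫ θ, H θ ∂v := hswap
    _ ≤ ∫ θ, Real.exp (alphaHat * θ) * (τ * betaCheck + I) ∂v := hstepD
    _ = (∫ θ, Real.exp (alphaHat * θ) ∂v) * (τ * betaCheck + I) := hmulright
    _ ≤ τ * betaCheck * E + (∫ θ, Real.exp (alphaHat * θ) ∂v) * I := by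
        have h1 : (∫ θ, Real.exp (alphaHat * θ) ∂v) * (τ * betaCheck)
            ≤ E * (τ * betaCheck) :=
          mul_le_mul_of_nonneg_right hexp_le (by positivity)
        nlinarith [hexp_nn, hI0]
end
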